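/- Let d ≥ 2 be an integer, λ > 0, and φ, ψ ∈ [0, π/2]. Set Λ = (4/(d+1))·(b_{d−1}/b_d)·λ. Then K_λ^d(φ, ψ) = (d+1)/4 · (1 + κ_Λ(φ + ψ)) − λ. -/

import Mathlib

open MeasureTheory Real Set

noncomputable section

/-- `b d` is the volume of the unit ball in `ℝ^d`. -/
def ballVol (d : ℕ) : ℝ := Real.pi ^ ((d : ℝ) / 2) / Real.Gamma ((d : ℝ) / 2 + 1)

/-- `K_λ^d(φ,ψ)`: the infimum of
`(d+1)/4 · |v₁+v₂|²/2 + λ((b_{d−1}/b_d)|n₁−n₂| − 1)` over unit vectors with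
`⟨v₁,n₁⟩ = cos φ` and `⟨v₂,n₂⟩ = cos ψ`. -/
def Kfun (d : ℕ) (lam φ ψ : ℝ) : ℝ :=
  sInf {r : ℝ | ∃ v₁ n₁ v₂ n₂ : EuclideanSpace ℝ (Fin d),
    ‖v₁‖ = 1 ∧ ‖n₁‖ = 1 ∧ ‖v₂‖ = 1 ∧ ‖n₂‖ = 1 ∧
    (inner ℝ v₁ n₁ : ℝ) = Real.cos φ ∧ (inner ℝ v₂ n₂ : ℝ) = Real.cos ψ ∧
    r = ((d : ℝ) + 1) / 4 * (‖v₁ + v₂‖ ^ 2 / 2) +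
        lam * (ballVol (d - 1) / ballVol d * ‖n₁ - n₂‖ - 1)}

/-- `κ_Λ(θ) = inf_{η ∈ [0,(π−θ)/2]} (cos(θ+2η) + 2Λ sin η)`. -/
def kappaFun (Λ θ : ℝ) : ℝ :=
  sInf ((fun η => Real.cos (θ + 2 * η) + 2 * Λ * Real.sin η) ''
    Set.Icc 0 ((Real.pi - θ) / 2))

end

section Aux

lemma ballVol_pos (n : ℕ) : 0 < ballVol n := by
  unfold ballVol
  apply div_pos (Real.rpow_pos_of_pos Real.pi_pos _)
  exact Real.Gamma_pos_of_pos (by positivity)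

open InnerProductGeometry in
lemma my_angle_triangle {E : Type*} [NormedAddCommGroup E] [InnerProductSpace ℝ E]
    {x y z : E} (hx : ‖x‖ = 1) (hy : ‖y‖ = 1) (hz : ‖z‖ = 1) :
    angle x z ≤ angle x y + angle y z := by
  rcases le_or_gt Real.pi (angle x y + angle y z) with h | h
  · exact (angle_le_pi x z).trans h
  · set a := angle x y with ha
    set b := angle y z with hb
    have ha0 : 0 ≤ a := angle_nonneg x y
    have hb0 : 0 ≤ b := angle_nonneg y z
    have haπ : a ≤ Real.pi := angle_le_pi x y
    have hbπ : b ≤ Real.pi := angle_le_pi y z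
    have hxy : (inner ℝ x y : ℝ) = Real.cos a := by
      rw [ha, cos_angle, hx, hy]; ring
    have hyz : (inner ℝ y z : ℝ) = Real.cos b := by
      rw [hb, cos_angle, hy, hz]; ring
    have hyy : (inner ℝ y y : ℝ) = 1 := by
      rw [real_inner_self_eq_norm_sq, hy]; norm_num
    have hyx : (inner ℝ y x : ℝ) = Real.cos a := by rw [real_inner_comm]; exact hxy
    have hzy : (inner ℝ z y : ℝ) = Real.cos b := by rw [real_inner_comm]; exact hyz
    set p := x - Real.cos a • y with hp
    set q := z - Real.cos b • y with hq
    have hpq : (inner ℝ p q : ℝ) = (inner ℝ x z : ℝ) - Real.cos a * Real.cos b := by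
      simp only [hp, hq, inner_sub_left, inner_sub_right, real_inner_smul_left,
        real_inner_smul_right, hyy]
      rw [hxy, hyz]; ring
    have hpp : (inner ℝ p p : ℝ) = Real.sin a ^ 2 := by
      have hxx : (inner ℝ x x : ℝ) = 1 := by
        rw [real_inner_self_eq_norm_sq, hx]; norm_num
      simp only [hp, inner_sub_left, inner_sub_right, real_inner_smul_left,
        real_inner_smul_right, hyy, hxx]
      rw [Real.sin_sq]
      simp only [hyx, hxy]; ring
    have hqq : (inner ℝ q q : ℝ) = Real.sin b ^ 2 := by
      have hzz : (inner ℝ z z : ℝ) = 1 := by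
        rw [real_inner_self_eq_norm_sq, hz]; norm_num
      simp only [hq, inner_sub_left, inner_sub_right, real_inner_smul_left,
        real_inner_smul_right, hyy, hzz]
      rw [Real.sin_sq]
      simp only [hzy, hyz]; ring
    have hsa : 0 ≤ Real.sin a := Real.sin_nonneg_of_nonneg_of_le_pi ha0 haπ
    have hsb : 0 ≤ Real.sin b := Real.sin_nonneg_of_nonneg_of_le_pi hb0 hbπ
    have hcs := real_inner_mul_inner_self_le p q
    rw [hpp, hqq] at hcs
    have hkey : Real.cos (a + b) ≤ (inner ℝ x z : ℝ) := by
      rw [Real.cos_add]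
      nlinarith [hcs, hpq, hsa, hsb, mul_nonneg hsa hsb]
    by_contra hcon
    push_neg at hcon
    have h1 : Real.cos (angle x z) = (inner ℝ x z : ℝ) := by
      rw [cos_angle, hx, hz]; ring
    have h2 : Real.cos (angle x z) < Real.cos (a + b) :=
      Real.strictAntiOn_cos ⟨by positivity, h.le⟩
        ⟨angle_nonneg x z, angle_le_pi x z⟩ hcon
    linarith

noncomputable def pvec (d : ℕ) (hd : 2 ≤ d) (a : ℝ) : EuclideanSpace ℝ (Fin d) :=
  EuclideanSpace.single ⟨0, by omega⟩ (Real.cos a) +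
    EuclideanSpace.single ⟨1, by omega⟩ (Real.sin a)

lemma pvec_inner (d : ℕ) (hd : 2 ≤ d) (a b : ℝ) :
    (inner ℝ (pvec d hd a) (pvec d hd b) : ℝ) = Real.cos (a - b) := by
  have hne : (⟨0, by omega⟩ : Fin d) ≠ ⟨1, by omega⟩ := by simp [Fin.ext_iff]
  simp [pvec, inner_add_left, inner_add_right, EuclideanSpace.inner_single_left,
    EuclideanSpace.single_apply, hne, hne.symm, Real.cos_sub]

lemma pvec_norm (d : ℕ) (hd : 2 ≤ d) (a : ℝ) : ‖pvec d hd a‖ = 1 := by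
  have h : (inner ℝ (pvec d hd a) (pvec d hd a) : ℝ) = 1 := by
    rw [pvec_inner]; simp
  have h2 : ‖pvec d hd a‖ ^ 2 = 1 := by rw [← real_inner_self_eq_norm_sq]; exact h
  rw [← Real.sqrt_one, ← h2, Real.sqrt_sq (norm_nonneg _)]

end Aux

set_option maxHeartbeats 1600000

theorem stmt2 (d : ℕ) (hd : 2 ≤ d) (lam : ℝ) (hlam : 0 < lam)
    (φ ψ : ℝ) (hφ : φ ∈ Set.Icc 0 (Real.pi / 2)) (hψ : ψ ∈ Set.Icc 0 (Real.pi / 2))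
    (Λ : ℝ) (hΛ : Λ = 4 / ((d : ℝ) + 1) * (ballVol (d - 1) / ballVol d) * lam) :
    Kfun d lam φ ψ = ((d : ℝ) + 1) / 4 * (1 + kappaFun Λ (φ + ψ)) - lam := by
  obtain ⟨hφ0, hφπ⟩ := hφ
  obtain ⟨hψ0, hψπ⟩ := hψ
  have hπ := Real.pi_pos
  have hd1 : ((d : ℝ) + 1) ≠ 0 := by positivity
  set c : ℝ := ballVol (d - 1) / ballVol d with hc
  have hc0 : 0 < c := div_pos (ballVol_pos _) (ballVol_pos _)
  set θ := φ + ψ with hθ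
  have hθ0 : 0 ≤ θ := by rw [hθ]; linarith
  have hθπ : θ ≤ Real.pi := by rw [hθ]; linarith
  set A : ℝ := ((d : ℝ) + 1) / 4 with hA
  have hA0 : 0 < A := by rw [hA]; positivity
  have hAc : A * (2 * Λ) = 2 * lam * c := by
    rw [hA, hΛ]; field_simp
  set g : ℝ → ℝ := fun η => Real.cos (θ + 2 * η) + 2 * Λ * Real.sin η with hg
  have hgc : Continuous g := by rw [hg]; fun_prop
  have hIne : (Set.Icc (0 : ℝ) ((Real.pi - θ) / 2)).Nonempty :=
    Set.nonempty_Icc.2 (by linarith)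
  have hcomp : IsCompact (g '' Set.Icc 0 ((Real.pi - θ) / 2)) := isCompact_Icc.image hgc
  have hne : (g '' Set.Icc 0 ((Real.pi - θ) / 2)).Nonempty := hIne.image g
  have hκdef : kappaFun Λ θ = sInf (g '' Set.Icc 0 ((Real.pi - θ) / 2)) := rfl
  have hκ_le : ∀ η ∈ Set.Icc (0 : ℝ) ((Real.pi - θ) / 2), kappaFun Λ θ ≤ g η := by
    intro η hη
    rw [hκdef]
    exact csInf_le hcomp.bddBelow (Set.mem_image_of_mem g hη)
  obtain ⟨η₁, hη₁, hgη₁⟩ : ∃ η₁ ∈ Set.Icc (0 : ℝ) ((Real.pi - θ) / 2), g η₁ = kappaFun Λ θ := by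
    have := hcomp.sInf_mem hne
    rw [← hκdef] at this
    exact this
  set t := A * (1 + kappaFun Λ θ) - lam with ht
  set S : Set ℝ := {r : ℝ | ∃ v₁ n₁ v₂ n₂ : EuclideanSpace ℝ (Fin d),
    ‖v₁‖ = 1 ∧ ‖n₁‖ = 1 ∧ ‖v₂‖ = 1 ∧ ‖n₂‖ = 1 ∧
    (inner ℝ v₁ n₁ : ℝ) = Real.cos φ ∧ (inner ℝ v₂ n₂ : ℝ) = Real.cos ψ ∧
    r = ((d : ℝ) + 1) / 4 * (‖v₁ + v₂‖ ^ 2 / 2) +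
        lam * (ballVol (d - 1) / ballVol d * ‖n₁ - n₂‖ - 1)} with hS
  have hK : Kfun d lam φ ψ = sInf S := rfl
  have hs1 : 0 ≤ Real.sin η₁ :=
    Real.sin_nonneg_of_nonneg_of_le_pi hη₁.1 (by linarith [hη₁.2])
  have htS : t ∈ S := by
    refine ⟨pvec d hd 0, pvec d hd φ, pvec d hd (θ + 2 * η₁), pvec d hd (φ + 2 * η₁),
      pvec_norm d hd _, pvec_norm d hd _, pvec_norm d hd _, pvec_norm d hd _, ?_, ?_, ?_⟩
    · rw [pvec_inner, show (0 : ℝ) - φ = -φ by ring, Real.cos_neg]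
    · rw [pvec_inner]; congr 1; rw [hθ]; ring
    · have hnv : ‖pvec d hd 0 + pvec d hd (θ + 2 * η₁)‖ ^ 2
          = 2 + 2 * Real.cos (θ + 2 * η₁) := by
        rw [norm_add_sq_real, pvec_norm, pvec_norm, pvec_inner,
          show (0 : ℝ) - (θ + 2 * η₁) = -(θ + 2 * η₁) by ring, Real.cos_neg]
        ring
      have hnn : ‖pvec d hd φ - pvec d hd (φ + 2 * η₁)‖ = 2 * Real.sin η₁ := by
        have h2 : ‖pvec d hd φ - pvec d hd (φ + 2 * η₁)‖ ^ 2 = (2 * Real.sin η₁) ^ 2 := by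
          rw [norm_sub_sq_real, pvec_norm, pvec_norm, pvec_inner,
            show φ - (φ + 2 * η₁) = -(2 * η₁) by ring, Real.cos_neg, Real.cos_two_mul]
          linear_combination (-4 : ℝ) * Real.sin_sq_add_cos_sq η₁
        rw [← Real.sqrt_sq (by positivity : (0 : ℝ) ≤ 2 * Real.sin η₁), ← h2,
          Real.sqrt_sq (norm_nonneg _)]
      rw [hnv, hnn, ht, ← hgη₁, hg]
      simp only
      rw [hA, hΛ, hc]
      have hbd : ballVol d ≠ 0 := (ballVol_pos d).ne'
      have hbd1 : ballVol (d - 1) ≠ 0 := (ballVol_pos (d - 1)).ne'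
      field_simp
      ring
  have hlb : ∀ r ∈ S, t ≤ r := by
    rintro r ⟨v₁, n₁, v₂, n₂, hv₁, hn₁, hv₂, hn₂, hi₁, hi₂, hr⟩
    set γ := InnerProductGeometry.angle v₁ v₂ with hγ
    set α := InnerProductGeometry.angle n₁ n₂ with hα
    have hγ0 : 0 ≤ γ := InnerProductGeometry.angle_nonneg _ _
    have hγπ : γ ≤ Real.pi := InnerProductGeometry.angle_le_pi _ _
    have hα0 : 0 ≤ α := InnerProductGeometry.angle_nonneg _ _
    have hαπ : α ≤ Real.pi := InnerProductGeometry.angle_le_pi _ _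
    have hang1 : InnerProductGeometry.angle v₁ n₁ = φ := by
      apply Real.injOn_cos
        ⟨InnerProductGeometry.angle_nonneg _ _, InnerProductGeometry.angle_le_pi _ _⟩
        ⟨hφ0, by linarith⟩
      rw [InnerProductGeometry.cos_angle, hv₁, hn₁, hi₁]; ring
    have hang2 : InnerProductGeometry.angle v₂ n₂ = ψ := by
      apply Real.injOn_cos
        ⟨InnerProductGeometry.angle_nonneg _ _, InnerProductGeometry.angle_le_pi _ _⟩
        ⟨hψ0, by linarith⟩
      rw [InnerProductGeometry.cos_angle, hv₂, hn₂, hi₂]; ring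
    have htri : γ ≤ φ + α + ψ := by
      calc γ ≤ InnerProductGeometry.angle v₁ n₁ + InnerProductGeometry.angle n₁ v₂ :=
            my_angle_triangle hv₁ hn₁ hv₂
        _ ≤ InnerProductGeometry.angle v₁ n₁ +
              (InnerProductGeometry.angle n₁ n₂ + InnerProductGeometry.angle n₂ v₂) :=
            add_le_add le_rfl (my_angle_triangle hn₁ hn₂ hv₂)
        _ = φ + α + ψ := by
            rw [hang1, InnerProductGeometry.angle_comm n₂ v₂, hang2, hα]; ring
    have hcosγ : (inner ℝ v₁ v₂ : ℝ) = Real.cos γ := by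
      rw [hγ, InnerProductGeometry.cos_angle, hv₁, hv₂]; ring
    have hcosα : (inner ℝ n₁ n₂ : ℝ) = Real.cos α := by
      rw [hα, InnerProductGeometry.cos_angle, hn₁, hn₂]; ring
    set η := α / 2 with hη
    have hη0 : 0 ≤ η := by rw [hη]; linarith
    have hηh : η ≤ Real.pi / 2 := by rw [hη]; linarith
    have hsinη : 0 ≤ Real.sin η := Real.sin_nonneg_of_nonneg_of_le_pi hη0 (by linarith)
    have hnv : ‖v₁ + v₂‖ ^ 2 = 2 + 2 * Real.cos γ := by
      rw [norm_add_sq_real, hv₁, hv₂, hcosγ]; ring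
    have hnn : ‖n₁ - n₂‖ = 2 * Real.sin η := by
      have h2 : ‖n₁ - n₂‖ ^ 2 = (2 * Real.sin η) ^ 2 := by
        rw [norm_sub_sq_real, hn₁, hn₂, hcosα,
          show α = 2 * (α / 2) by ring, Real.cos_two_mul]
        rw [← hη]
        linear_combination (-4 : ℝ) * Real.sin_sq_add_cos_sq η
      rw [← Real.sqrt_sq (by positivity : (0 : ℝ) ≤ 2 * Real.sin η), ← h2,
        Real.sqrt_sq (norm_nonneg _)]
    rw [hr, hnv, hnn, ← hA, ← hc]
    rcases le_or_gt η ((Real.pi - θ) / 2) with hcase | hcase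
    · have h1 : kappaFun Λ θ ≤ g η := hκ_le η ⟨hη0, hcase⟩
      have hcos : Real.cos (θ + 2 * η) ≤ Real.cos γ := by
        apply Real.cos_le_cos_of_nonneg_of_le_pi hγ0 (by linarith)
        have : θ + 2 * η = φ + α + ψ := by rw [hθ, hη]; ring
        linarith
      have h2 : A * g η = A * Real.cos (θ + 2 * η) + 2 * lam * c * Real.sin η := by
        rw [hg]; simp only
        linear_combination Real.sin η * hAc
      have h3 := mul_le_mul_of_nonneg_left h1 hA0.le
      have h4 := mul_le_mul_of_nonneg_left hcos hA0.le
      rw [ht]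
      linarith [h3, h2, h4]
    · have hη₀0 : (0 : ℝ) ≤ (Real.pi - θ) / 2 := by linarith
      have h1 : kappaFun Λ θ ≤ g ((Real.pi - θ) / 2) := hκ_le _ ⟨hη₀0, le_refl _⟩
      have hcos : Real.cos (θ + 2 * ((Real.pi - θ) / 2)) ≤ Real.cos γ := by
        rw [show θ + 2 * ((Real.pi - θ) / 2) = Real.pi by ring, Real.cos_pi]
        exact Real.neg_one_le_cos γ
      have hsin : Real.sin ((Real.pi - θ) / 2) ≤ Real.sin η := by
        apply Real.strictMonoOn_sin.monotoneOn ⟨by linarith, by linarith⟩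
          ⟨by linarith, by linarith⟩ hcase.le
      have h2 : A * g ((Real.pi - θ) / 2)
          = A * Real.cos (θ + 2 * ((Real.pi - θ) / 2))
            + 2 * lam * c * Real.sin ((Real.pi - θ) / 2) := by
        rw [hg]; simp only
        linear_combination Real.sin ((Real.pi - θ) / 2) * hAc
      have h3 := mul_le_mul_of_nonneg_left h1 hA0.le
      have h4 := mul_le_mul_of_nonneg_left hcos hA0.le
      have h5 : 2 * lam * c * Real.sin ((Real.pi - θ) / 2) ≤ 2 * lam * c * Real.sin η :=
        mul_le_mul_of_nonneg_left hsin (by positivity)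
      rw [ht]
      linarith [h3, h2, h4, h5]
  rw [hK]
  exact le_antisymm (csInf_le ⟨t, hlb⟩ htS) (le_csInf ⟨t, htS⟩ hlb)
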